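/- For every real ν ≥ 1/2, the function t ↦ ξ_ν(t) = −t·f_ν(t) + log((2π)^ν · I_{ν−1}(t)/t^{ν−1}) is strictly decreasing on (0,∞). -/

import Mathlib

open MeasureTheory Real Filter Set
open scoped ENNReal NNReal Topology

noncomputable section

/-- The modified Bessel function of the first kind `I_ν(t)`. -/
def besselI (ν t : ℝ) : ℝ :=
  ∑' m : ℕ, (t / 2) ^ (2 * (m : ℝ) + ν) / ((m.factorial : ℝ) * Real.Gamma ((m : ℝ) + ν + 1))

/-- The ratio `f_ν(t) = I_ν(t) / I_{ν-1}(t)`. -/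
def besselRatio (ν t : ℝ) : ℝ := besselI ν t / besselI (ν - 1) t

/-- The inverse `f_ν⁻¹ : (0,1) → (0,∞)` of the strictly increasing bijection
`f_ν : (0,∞) → (0,1)`. -/
def besselRatioInv (ν y : ℝ) : ℝ := Function.invFunOn (besselRatio ν) (Set.Ioi 0) y

/-- The function `ξ_ν(t) = -t f_ν(t) + log((2π)^ν I_{ν-1}(t) / t^{ν-1})`. -/
def xiFun (ν t : ℝ) : ℝ :=
  -t * besselRatio ν t + Real.log ((2 * π) ^ ν * besselI (ν - 1) t / t ^ (ν - 1))

/-- The function `h_ν(t) = ξ_ν(f_ν⁻¹(t))`, for `t ∈ (0,1)`. -/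
def hFun (ν t : ℝ) : ℝ := xiFun ν (besselRatioInv ν t)

/-- Surface area of the unit `(n-1)`-sphere in `ℝⁿ`: `S_{n-1} = 2 π^{n/2} / Γ(n/2)`. -/
def surfaceArea (n : ℕ) : ℝ := 2 * π ^ ((n : ℝ) / 2) / Real.Gamma ((n : ℝ) / 2)

/-- `n`-dimensional Euclidean space. -/
abbrev EucSp (n : ℕ) := EuclideanSpace ℝ (Fin n)

/-- The uniform (normalized rotation-invariant) probability distribution on the sphere
`S^{n-1}(R) = {x ∈ ℝⁿ : ‖x‖ = R}`; for `R = 0` it is the point mass at the origin. -/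
def sphereUniform (n : ℕ) (R : ℝ) : Measure (EucSp n) :=
  ((volume : Measure (EucSp n)).toSphere Set.univ)⁻¹ •
    Measure.map (fun x : Metric.sphere (0 : EucSp n) 1 => R • (x : EucSp n))
      (volume : Measure (EucSp n)).toSphere

/-- Kullback-Leibler divergence `KL(μ‖ν)`, with value `∞` unless `μ ≪ ν` and the
log-likelihood ratio is `μ`-integrable. -/
def klDiv {Ω : Type*} [MeasurableSpace Ω] (μ ν : Measure Ω) : ℝ≥0∞ :=
  open scoped Classical in
  if μ ≪ ν ∧ Integrable (llr μ ν) μ then ENNReal.ofReal (∫ x, llr μ ν x ∂μ) else ⊤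

/-- The rate-distortion function `R_n(D;R)` of the uniform distribution on `S^{n-1}(R)`
under squared error distortion: the infimum of the mutual information `I(X̂;X)` over all
joint laws `π` of pairs `(X̂, X)` of `ℝⁿ`-valued random vectors such that `X ∼ μ_R` and
`E[‖X̂ - X‖²] ≤ D`. -/
def rateDistortion (n : ℕ) (D R : ℝ) : ℝ≥0∞ :=
  ⨅ (P : Measure (EucSp n × EucSp n)) (_ : IsProbabilityMeasure P)
    (_ : Measure.map Prod.snd P = sphereUniform n R)
    (_ : ∫⁻ y, ENNReal.ofReal (‖y.1 - y.2‖ ^ (2:ℕ)) ∂P ≤ ENNReal.ofReal D),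
    klDiv P ((Measure.map Prod.fst P).prod (Measure.map Prod.snd P))


namespace XiAux

/-- auxiliary entire-type series `J a x = ∑ x^m / (m! Γ(m+a))`. -/
def JJ (a x : ℝ) : ℝ := ∑' m : ℕ, x ^ m / (m.factorial * Real.Gamma (m + a))

lemma gamma_pos (a : ℝ) (ha : 0 < a) (m : ℕ) : 0 < Real.Gamma ((m : ℝ) + a) :=
  Real.Gamma_pos_of_pos (by positivity)

lemma denom_pos (a : ℝ) (ha : 0 < a) (m : ℕ) :
    0 < (m.factorial : ℝ) * Real.Gamma ((m : ℝ) + a) := by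
  have := gamma_pos a ha m
  positivity

lemma gamma_succ_arg (a : ℝ) (ha : 0 < a) (m : ℕ) :
    Real.Gamma ((m : ℝ) + 1 + a) = ((m : ℝ) + a) * Real.Gamma ((m : ℝ) + a) := by
  have h : ((m : ℝ) + 1 + a) = ((m : ℝ) + a) + 1 := by ring
  rw [h, Real.Gamma_add_one (by positivity)]

/-- the key index-shift identity for term coefficients. -/
lemma term_shift (a : ℝ) (ha : 0 < a) (m : ℕ) (x : ℝ) :
    ((m : ℝ) + 1) * x ^ m / ((m + 1).factorial * Real.Gamma (((m : ℕ) + 1 : ℕ) + a)) =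
      x ^ m / (m.factorial * Real.Gamma ((m : ℝ) + (a + 1))) := by
  have h1 : (((m : ℕ) + 1 : ℕ) : ℝ) + a = (m : ℝ) + 1 + a := by push_cast; ring
  have h2 : ((m : ℝ) + (a + 1)) = ((m : ℝ) + a) + 1 := by ring
  rw [h1, gamma_succ_arg a ha m, h2, Real.Gamma_add_one (by positivity), Nat.factorial_succ]
  have hg := gamma_pos a ha m
  have hf : (0:ℝ) < m.factorial := by positivity
  push_cast
  field_simp

lemma summable_JJ (a : ℝ) (ha : 0 < a) (x : ℝ) :
    Summable (fun m : ℕ => x ^ m / (m.factorial * Real.Gamma ((m : ℝ) + a))) := by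
  apply summable_of_ratio_norm_eventually_le (r := 1/2) (by norm_num)
  have : ∀ᶠ m : ℕ in atTop, 2 * |x| ≤ (m : ℝ) := by
    filter_upwards [eventually_ge_atTop (Nat.ceil (2 * |x|))] with m hm
    calc 2 * |x| ≤ (Nat.ceil (2*|x|) : ℝ) := Nat.le_ceil _
    _ ≤ m := by exact_mod_cast hm
  filter_upwards [this, eventually_ge_atTop 1] with m hm hm1
  have hg := gamma_pos a ha m
  have hg' := gamma_pos a ha (m+1)
  have hf : (0:ℝ) < m.factorial := by positivity
  have hf' : (0:ℝ) < (m+1).factorial := by positivity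
  rw [Real.norm_eq_abs, Real.norm_eq_abs, abs_div, abs_div, abs_pow, abs_pow,
    abs_of_pos (denom_pos a ha (m+1)), abs_of_pos (denom_pos a ha m)]
  rw [← mul_div_assoc, div_le_div_iff₀ (by positivity) (by positivity)]
  have harg : (((m+1 : ℕ)) : ℝ) + a = ((m:ℝ) + a) + 1 := by push_cast; ring
  rw [harg, Real.Gamma_add_one (by positivity), Nat.factorial_succ, pow_succ]
  push_cast
  have hm0 : (1:ℝ) ≤ (m:ℝ) := by exact_mod_cast hm1
  have key : |x| * 2 ≤ ((m:ℝ) + 1) * ((m:ℝ) + a) := by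
    calc |x| * 2 = 2 * |x| := by ring
    _ ≤ (m:ℝ) := hm
    _ ≤ ((m:ℝ) + 1) * ((m:ℝ) + a) := by nlinarith
  nlinarith [pow_nonneg (abs_nonneg x) m, mul_pos hf hg,
    mul_nonneg (pow_nonneg (abs_nonneg x) m) (mul_pos hf hg).le,
    mul_le_mul_of_nonneg_right key (mul_nonneg (pow_nonneg (abs_nonneg x) m) (mul_pos hf hg).le)]


lemma summable_JJ_norm (a : ℝ) (ha : 0 < a) (x : ℝ) :
    Summable (fun m : ℕ => ‖x ^ m / (m.factorial * Real.Gamma ((m : ℝ) + a))‖) := by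
  have := summable_JJ a ha |x|
  apply this.congr
  intro m
  rw [Real.norm_eq_abs, abs_div, abs_pow, abs_of_pos (denom_pos a ha m)]

lemma summable_JJ_shift (a : ℝ) (ha : 0 < a) (r : ℝ) :
    Summable (fun m : ℕ => (m : ℝ) * r ^ (m - 1) / (m.factorial * Real.Gamma ((m : ℝ) + a))) := by
  rw [← summable_nat_add_iff 1]
  apply (summable_JJ (a+1) (by positivity) r).congr
  intro m
  have := term_shift a ha m r
  simpa using this.symm

lemma hasDerivAt_JJ (a : ℝ) (ha : 0 < a) (x : ℝ) :
    HasDerivAt (JJ a) (JJ (a + 1) x) x := by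
  set R : ℝ := |x| + 1 with hR
  have hxR : x ∈ Metric.ball (0:ℝ) R := by
    simp only [Metric.mem_ball, Real.dist_eq, sub_zero, hR]
    linarith
  have key : HasDerivAt (fun z => ∑' m : ℕ, z ^ m / (m.factorial * Real.Gamma ((m : ℝ) + a)))
      (∑' m : ℕ, (m : ℝ) * x ^ (m - 1) / (m.factorial * Real.Gamma ((m : ℝ) + a))) x := by
    refine hasDerivAt_tsum_of_isPreconnected
      (u := fun m : ℕ => (m : ℝ) * R ^ (m - 1) / (m.factorial * Real.Gamma ((m : ℝ) + a)))
      (g := fun m z => z ^ m / (m.factorial * Real.Gamma ((m : ℝ) + a)))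
      (g' := fun m z => (m : ℝ) * z ^ (m - 1) / (m.factorial * Real.Gamma ((m : ℝ) + a)))
      (summable_JJ_shift a ha R) Metric.isOpen_ball
      ((convex_ball (0:ℝ) R).isPreconnected)
      (fun m y _ => (hasDerivAt_pow m y).div_const _) ?_ hxR (summable_JJ a ha x) hxR
    intro m y hy
    ·
      have hyR : |y| ≤ R := by
        have : dist y 0 < R := Metric.mem_ball.1 hy
        rw [Real.dist_eq, sub_zero] at this
        linarith
      have hg := denom_pos a ha m
      rw [Real.norm_eq_abs, abs_div, abs_of_pos hg, abs_mul, abs_pow, Nat.abs_cast]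
      have hRnn : (0:ℝ) ≤ R := by positivity
      have hple : |y| ^ (m-1) ≤ R ^ (m-1) := pow_le_pow_left₀ (abs_nonneg y) hyR _
      have : (m:ℝ) * |y| ^ (m-1) ≤ (m:ℝ) * R ^ (m-1) :=
        mul_le_mul_of_nonneg_left hple (Nat.cast_nonneg m)
      exact (div_le_div_iff_of_pos_right hg).2 this
  have heq : (∑' m : ℕ, (m : ℝ) * x ^ (m - 1) / (m.factorial * Real.Gamma ((m : ℝ) + a)))
      = JJ (a+1) x := by
    have hs : Summable (fun m : ℕ => (m : ℝ) * x ^ (m - 1) /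
        (m.factorial * Real.Gamma ((m : ℝ) + a))) := summable_JJ_shift a ha x
    rw [Summable.tsum_eq_zero_add hs]
    simp only [Nat.cast_zero, zero_mul, zero_div, zero_add]
    rw [JJ]
    apply tsum_congr
    intro m
    have := term_shift a ha m x
    simpa using this
  rw [← heq]
  exact key

lemma JJ_pos (a : ℝ) (ha : 0 < a) (x : ℝ) (hx : 0 ≤ x) : 0 < JJ a x := by
  have hs := summable_JJ a ha x
  apply Summable.tsum_pos hs _ 0
  · simp only [pow_zero, Nat.cast_zero, zero_add, Nat.factorial_zero, Nat.cast_one, one_mul]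
    have := Real.Gamma_pos_of_pos ha
    positivity
  · intro m
    have := denom_pos a ha m
    positivity


/-- Cauchy product coefficient. -/
def Vco (a b : ℝ) (k : ℕ) : ℝ :=
  ∑ p ∈ Finset.HasAntidiagonal.antidiagonal k,
    1 / (p.1.factorial * p.2.factorial * Real.Gamma ((p.1 : ℝ) + a) * Real.Gamma ((p.2 : ℝ) + b))

lemma Vco_zero (a b : ℝ) : Vco a b 0 = 1 / (Real.Gamma a * Real.Gamma b) := by
  simp [Vco]

lemma Vco_pos (a b : ℝ) (ha : 0 < a) (hb : 0 < b) (k : ℕ) : 0 < Vco a b k := by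
  apply Finset.sum_pos
  · intro p _
    have h1 := gamma_pos a ha p.1
    have h2 := gamma_pos b hb p.2
    have hf1 : (0:ℝ) < p.1.factorial := by positivity
    have hf2 : (0:ℝ) < p.2.factorial := by positivity
    positivity
  · exact ⟨(0, k), by simp⟩

/-- Pascal-type recurrence for `Vco`. -/
lemma Vco_pascal (a b : ℝ) (ha : 0 < a) (hb : 0 < b) (k : ℕ) :
    ((k : ℝ) + 1) * Vco a b (k + 1) = Vco (a + 1) b k + Vco a (b + 1) k := by
  have expand : ((k : ℝ) + 1) * Vco a b (k+1) =
      (∑ p ∈ Finset.HasAntidiagonal.antidiagonal (k+1), (p.1 : ℝ) *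
        (1 / (p.1.factorial * p.2.factorial * Real.Gamma ((p.1 : ℝ) + a) * Real.Gamma ((p.2 : ℝ) + b))))
      + (∑ p ∈ Finset.HasAntidiagonal.antidiagonal (k+1), (p.2 : ℝ) *
        (1 / (p.1.factorial * p.2.factorial * Real.Gamma ((p.1 : ℝ) + a) * Real.Gamma ((p.2 : ℝ) + b)))) := by
    rw [Vco, Finset.mul_sum, ← Finset.sum_add_distrib]
    apply Finset.sum_congr rfl
    intro p hp
    have : p.1 + p.2 = k + 1 := Finset.HasAntidiagonal.mem_antidiagonal.1 hp
    have : (p.1 : ℝ) + p.2 = (k : ℝ) + 1 := by exact_mod_cast congrArg (Nat.cast (R := ℝ)) this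
    rw [← this]
    ring
  have S1 : (∑ p ∈ Finset.HasAntidiagonal.antidiagonal (k+1), (p.1 : ℝ) *
      (1 / (p.1.factorial * p.2.factorial * Real.Gamma ((p.1 : ℝ) + a) * Real.Gamma ((p.2 : ℝ) + b))))
      = Vco (a+1) b k := by
    rw [Finset.Nat.antidiagonal_succ, Finset.sum_cons, Finset.sum_map]
    simp only [Nat.cast_zero, zero_mul, zero_add]
    rw [Vco]
    apply Finset.sum_congr rfl
    intro p _
    simp only [Function.Embedding.coe_prodMap, Function.Embedding.coeFn_mk,
      Function.Embedding.refl_apply, Prod.map_fst, Prod.map_snd]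
    have h1 : ((p.1 + 1 : ℕ) : ℝ) + a = ((p.1 : ℝ) + a) + 1 := by push_cast; ring
    have h2 : ((p.1 : ℝ) + (a + 1)) = ((p.1 : ℝ) + a) + 1 := by ring
    rw [Nat.succ_eq_add_one, h1, Real.Gamma_add_one (by positivity), Nat.factorial_succ, h2,
      Real.Gamma_add_one (by positivity)]
    have hg1 := gamma_pos a ha p.1
    have hg2 := gamma_pos b hb p.2
    have hf1 : (0:ℝ) < p.1.factorial := by positivity
    have hf2 : (0:ℝ) < p.2.factorial := by positivity
    have hp1 : (0:ℝ) < (p.1:ℝ) + a := by positivity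
    push_cast
    field_simp
  have S2 : (∑ p ∈ Finset.HasAntidiagonal.antidiagonal (k+1), (p.2 : ℝ) *
      (1 / (p.1.factorial * p.2.factorial * Real.Gamma ((p.1 : ℝ) + a) * Real.Gamma ((p.2 : ℝ) + b))))
      = Vco a (b+1) k := by
    rw [Finset.Nat.antidiagonal_succ', Finset.sum_cons, Finset.sum_map]
    simp only [Nat.cast_zero, zero_mul, zero_add]
    rw [Vco]
    apply Finset.sum_congr rfl
    intro p _
    simp only [Function.Embedding.coe_prodMap, Function.Embedding.coeFn_mk,
      Function.Embedding.refl_apply, Prod.map_fst, Prod.map_snd]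
    have h1 : ((p.2 + 1 : ℕ) : ℝ) + b = ((p.2 : ℝ) + b) + 1 := by push_cast; ring
    have h2 : ((p.2 : ℝ) + (b + 1)) = ((p.2 : ℝ) + b) + 1 := by ring
    rw [Nat.succ_eq_add_one, h1, Real.Gamma_add_one (by positivity), Nat.factorial_succ, h2,
      Real.Gamma_add_one (by positivity)]
    have hg1 := gamma_pos a ha p.1
    have hg2 := gamma_pos b hb p.2
    have hf1 : (0:ℝ) < p.1.factorial := by positivity
    have hf2 : (0:ℝ) < p.2.factorial := by positivity
    have hp2 : (0:ℝ) < (p.2:ℝ) + b := by positivity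
    push_cast
    field_simp
  rw [expand, S1, S2]

/-- Gamma-Vandermonde identity. -/
lemma Vco_eq (k : ℕ) : ∀ a b : ℝ, 0 < a → 0 < b →
    Vco a b k = (∏ i ∈ Finset.range k, (a + b + k - 1 + i)) /
      (k.factorial * Real.Gamma (a + k) * Real.Gamma (b + k)) := by
  induction k with
  | zero =>
      intro a b ha hb
      simp [Vco_zero]
  | succ k ih =>
      intro a b ha hb
      have hk1 : (0:ℝ) < (k:ℝ) + 1 := by positivity
      have key := Vco_pascal a b ha hb k
      rw [ih (a+1) b (by positivity) hb, ih a (b+1) ha (by positivity)] at key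
      have hprod : ∀ c : ℝ, (∏ i ∈ Finset.range k, (c + k - 1 + 1 + i)) =
          ∏ i ∈ Finset.range k, (c + k + i) := by
        intro c; apply Finset.prod_congr rfl; intro i _; ring
      have hgam_a : Real.Gamma (a + 1 + k) = ((a : ℝ) + k) * Real.Gamma (a + k) := by
        have h : (a + 1 + (k:ℝ)) = (a + k) + 1 := by ring
        rw [h, Real.Gamma_add_one (by positivity)]
      have hgam_b : Real.Gamma (b + 1 + k) = ((b : ℝ) + k) * Real.Gamma (b + k) := by
        have h : (b + 1 + (k:ℝ)) = (b + k) + 1 := by ring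
        rw [h, Real.Gamma_add_one (by positivity)]
      have hgam_a' : Real.Gamma (a + ((k:ℕ)+1:ℕ)) = ((a : ℝ) + k) * Real.Gamma (a + k) := by
        have h : (a + (((k:ℕ)+1:ℕ) : ℝ)) = (a + k) + 1 := by push_cast; ring
        rw [h, Real.Gamma_add_one (by positivity)]
      have hgam_b' : Real.Gamma (b + ((k:ℕ)+1:ℕ)) = ((b : ℝ) + k) * Real.Gamma (b + k) := by
        have h : (b + (((k:ℕ)+1:ℕ) : ℝ)) = (b + k) + 1 := by push_cast; ring
        rw [h, Real.Gamma_add_one (by positivity)]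
      -- products appearing on the RHS of key
      have hPa : (∏ i ∈ Finset.range k, (a + 1 + b + (k:ℝ) - 1 + i)) =
          ∏ i ∈ Finset.range k, (a + b + (k:ℝ) + i) := by
        apply Finset.prod_congr rfl; intro i _; ring
      have hPb : (∏ i ∈ Finset.range k, (a + (b + 1) + (k:ℝ) - 1 + i)) =
          ∏ i ∈ Finset.range k, (a + b + (k:ℝ) + i) := by
        apply Finset.prod_congr rfl; intro i _; ring
      rw [hPa, hgam_a, hPb, hgam_b] at key
      -- target product
      have hPtar : (∏ i ∈ Finset.range (k+1), (a + b + ((k:ℕ)+1:ℕ) - 1 + i)) =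
          (∏ i ∈ Finset.range k, (a + b + (k:ℝ) + i)) * (a + b + 2*k) := by
        rw [Finset.prod_range_succ]
        push_cast
        congr 1
        · apply Finset.prod_congr rfl; intro i _; ring
        · ring
      have hga := gamma_pos a ha k
      have hgb := gamma_pos b hb k
      have hga' : (0:ℝ) < Real.Gamma (a + k) := by
        have : ((k:ℝ) + a) = a + k := by ring
        rwa [this] at hga
      have hgb' : (0:ℝ) < Real.Gamma (b + k) := by
        have : ((k:ℝ) + b) = b + k := by ring
        rwa [this] at hgb
      have hfk : (0:ℝ) < k.factorial := by positivity
      have key2 : ((k:ℝ)+1) * Vco a b (k+1) *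
          ((k.factorial : ℝ) * ((a + k) * Real.Gamma (a + k)) * ((b + k) * Real.Gamma (b + k)))
          = (∏ i ∈ Finset.range k, (a + b + (k:ℝ) + i)) * (a + b + 2*k) := by
        rw [key]
        field_simp
        ring
      have hFs : (((k+1).factorial : ℕ) : ℝ) = ((k:ℝ)+1) * k.factorial := by
        rw [Nat.factorial_succ]; push_cast; ring
      rw [hgam_a', hgam_b', hPtar, hFs, eq_div_iff (by positivity)]
      linear_combination key2


/-- Cauchy product of two `JJ` series. -/
lemma JJ_mul_JJ (a b : ℝ) (ha : 0 < a) (hb : 0 < b) (x : ℝ) :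
    JJ a x * JJ b x = ∑' k : ℕ, Vco a b k * x ^ k := by
  rw [JJ, JJ, tsum_mul_tsum_eq_tsum_sum_antidiagonal_of_summable_norm
    (summable_JJ_norm a ha x) (summable_JJ_norm b hb x)]
  apply tsum_congr
  intro k
  rw [Vco, Finset.sum_mul]
  apply Finset.sum_congr rfl
  intro p hp
  have hpk : p.1 + p.2 = k := Finset.HasAntidiagonal.mem_antidiagonal.1 hp
  rw [← hpk, pow_add, div_mul_div_comm, one_div, inv_mul_eq_div]
  congr 1
  ring

lemma summable_Vco (a b : ℝ) (ha : 0 < a) (hb : 0 < b) (x : ℝ) :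
    Summable (fun k : ℕ => Vco a b k * x ^ k) := by
  have h := (summable_norm_sum_mul_antidiagonal_of_summable_norm
    (f := fun m : ℕ => x ^ m / (m.factorial * Real.Gamma ((m : ℝ) + a)))
    (g := fun m : ℕ => x ^ m / (m.factorial * Real.Gamma ((m : ℝ) + b)))
    (summable_JJ_norm a ha x) (summable_JJ_norm b hb x)).of_norm
  apply h.congr
  intro k
  rw [Vco, Finset.sum_mul]
  apply Finset.sum_congr rfl
  intro p hp
  have hpk : p.1 + p.2 = k := Finset.HasAntidiagonal.mem_antidiagonal.1 hp
  rw [← hpk, pow_add, div_mul_div_comm, one_div, inv_mul_eq_div]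
  congr 1
  ring

/-- Coefficients of the series `H(x) = J_{ν+1} J_ν + 2x (J_{ν+2} J_ν - J_{ν+1}²)`. -/
def hco (ν : ℝ) : ℕ → ℝ
  | 0 => Vco (ν+1) ν 0
  | (k+1) => Vco (ν+1) ν (k+1) + 2*(Vco (ν+2) ν k - Vco (ν+1) (ν+1) k)

lemma hco_zero_pos (ν : ℝ) (hν : 0 < ν) : 0 < hco ν 0 :=
  Vco_pos _ _ (by positivity) hν 0

lemma hco_succ_nonneg (ν : ℝ) (hν : 1/2 ≤ ν) (k : ℕ) : 0 ≤ hco ν (k+1) := by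
  have hν0 : (0:ℝ) < ν := by linarith
  set w : ℝ := ν + k with hw
  have hw0 : (0:ℝ) < w := by positivity
  have hg : (0:ℝ) < Real.Gamma w := Real.Gamma_pos_of_pos hw0
  set P : ℝ := ∏ i ∈ Finset.range k, (2*ν + (k:ℝ) + 1 + i) with hP
  have hP0 : (0:ℝ) < P := by
    apply Finset.prod_pos
    intro i _
    positivity
  have hA : Vco (ν+1) ν (k+1) = (P * (2*ν + 2*k + 1)) /
      (((k:ℝ)+1) * k.factorial * ((w+1) * w * Real.Gamma w * (w * Real.Gamma w))) := by
    rw [Vco_eq (k+1) (ν+1) ν (by positivity) hν0]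
    have hprod : (∏ i ∈ Finset.range (k+1), ((ν+1) + ν + ((k:ℕ)+1:ℕ) - 1 + (i:ℝ))) =
        P * (2*ν + 2*k + 1) := by
      rw [Finset.prod_range_succ, hP]
      push_cast
      congr 1
      · apply Finset.prod_congr rfl; intro i _; ring
      · ring
    have hg1 : Real.Gamma ((ν+1) + ((k:ℕ)+1:ℕ)) = (w+1) * w * Real.Gamma w := by
      have h1 : ((ν+1) + (((k:ℕ)+1:ℕ):ℝ)) = (w + 1) + 1 := by push_cast; rw [hw]; ring
      rw [h1, Real.Gamma_add_one (by positivity), Real.Gamma_add_one (by positivity)]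
      ring
    have hg2 : Real.Gamma (ν + ((k:ℕ)+1:ℕ)) = w * Real.Gamma w := by
      have h1 : (ν + (((k:ℕ)+1:ℕ):ℝ)) = w + 1 := by push_cast; rw [hw]; ring
      rw [h1, Real.Gamma_add_one (by positivity)]
    have hfs : (((k+1).factorial : ℕ) : ℝ) = ((k:ℝ)+1) * k.factorial := by
      rw [Nat.factorial_succ]; push_cast; ring
    rw [hprod, hg1, hg2, hfs]
    ring
  have hB : Vco (ν+2) ν k = P / ((k.factorial : ℝ) * ((w+1) * w * Real.Gamma w * Real.Gamma w)) := by
    rw [Vco_eq k (ν+2) ν (by positivity) hν0]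
    have hprod : (∏ i ∈ Finset.range k, ((ν+2) + ν + (k:ℝ) - 1 + i)) = P := by
      rw [hP]; apply Finset.prod_congr rfl; intro i _; ring
    have hg1 : Real.Gamma ((ν+2) + (k:ℝ)) = (w+1) * w * Real.Gamma w := by
      have h1 : ((ν+2) + (k:ℝ)) = (w + 1) + 1 := by rw [hw]; ring
      rw [h1, Real.Gamma_add_one (by positivity), Real.Gamma_add_one (by positivity)]
      ring
    have hg2 : Real.Gamma (ν + (k:ℝ)) = Real.Gamma w := by rw [hw]
    rw [hprod, hg1, hg2]
    ring
  have hC : Vco (ν+1) (ν+1) k = P / ((k.factorial : ℝ) * (w * Real.Gamma w * (w * Real.Gamma w))) := by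
    rw [Vco_eq k (ν+1) (ν+1) (by positivity) (by positivity)]
    have hprod : (∏ i ∈ Finset.range k, ((ν+1) + (ν+1) + (k:ℝ) - 1 + i)) = P := by
      rw [hP]; apply Finset.prod_congr rfl; intro i _; ring
    have hg1 : Real.Gamma ((ν+1) + (k:ℝ)) = w * Real.Gamma w := by
      have h1 : ((ν+1) + (k:ℝ)) = w + 1 := by rw [hw]; ring
      rw [h1, Real.Gamma_add_one (by positivity)]
    rw [hprod, hg1]
    ring
  have hfk : (0:ℝ) < k.factorial := by positivity
  have key : hco ν (k+1) = (2*ν - 1) *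
      (P / (((k:ℝ)+1) * k.factorial * ((w+1) * w^2 * Real.Gamma w ^ 2))) := by
    show Vco (ν+1) ν (k+1) + 2*(Vco (ν+2) ν k - Vco (ν+1) (ν+1) k) = _
    rw [hA, hB, hC]
    field_simp
    ring
  rw [key]
  have h1 : (0:ℝ) ≤ 2*ν - 1 := by linarith
  positivity


lemma H_eq (ν : ℝ) (hν0 : 0 < ν) (x : ℝ) :
    JJ (ν+1) x * JJ ν x + 2*x*(JJ (ν+2) x * JJ ν x - JJ (ν+1) x * JJ (ν+1) x)
      = ∑' k : ℕ, hco ν k * x ^ k := by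
  have hα := summable_Vco (ν+1) ν (by positivity) hν0 x
  have hβ := summable_Vco (ν+2) ν (by positivity) hν0 x
  have hc := summable_Vco (ν+1) (ν+1) (by positivity) (by positivity) x
  have hβc : Summable (fun k : ℕ => Vco (ν+2) ν k * x ^ k - Vco (ν+1) (ν+1) k * x ^ k) :=
    hβ.sub hc
  -- the shifted tail
  have hE : Summable (fun k : ℕ => (2*(Vco (ν+2) ν k - Vco (ν+1) (ν+1) k)) * x ^ (k+1)) := by
    apply ((hβc.mul_left (2*x))).congr
    intro k
    rw [pow_succ]
    ring
  have hEfull : Summable (fun k : ℕ => (Nat.rec (motive := fun _ => ℝ) 0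
      (fun k _ => (2*(Vco (ν+2) ν k - Vco (ν+1) (ν+1) k)) * x ^ (k+1)) k : ℝ)) := by
    rw [← summable_nat_add_iff 1]
    exact hE
  set E : ℕ → ℝ := fun k => (Nat.rec (motive := fun _ => ℝ) 0
      (fun k _ => (2*(Vco (ν+2) ν k - Vco (ν+1) (ν+1) k)) * x ^ (k+1)) k : ℝ) with hEdef
  have hpt : ∀ k : ℕ, hco ν k * x ^ k = Vco (ν+1) ν k * x ^ k + E k := by
    intro k
    cases k with
    | zero => simp [hco, hEdef]
    | succ k =>
        show (Vco (ν+1) ν (k+1) + 2*(Vco (ν+2) ν k - Vco (ν+1) (ν+1) k)) * x ^ (k+1) = _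
        have : E (k+1) = (2*(Vco (ν+2) ν k - Vco (ν+1) (ν+1) k)) * x ^ (k+1) := rfl
        rw [this]
        ring
  calc JJ (ν+1) x * JJ ν x + 2*x*(JJ (ν+2) x * JJ ν x - JJ (ν+1) x * JJ (ν+1) x)
      = (∑' k : ℕ, Vco (ν+1) ν k * x ^ k) + 2*x*((∑' k : ℕ, Vco (ν+2) ν k * x ^ k)
          - (∑' k : ℕ, Vco (ν+1) (ν+1) k * x ^ k)) := by
        rw [JJ_mul_JJ (ν+1) ν (by positivity) hν0 x, JJ_mul_JJ (ν+2) ν (by positivity) hν0 x,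
          JJ_mul_JJ (ν+1) (ν+1) (by positivity) (by positivity) x]
    _ = (∑' k : ℕ, Vco (ν+1) ν k * x ^ k) + ∑' k : ℕ, E k := by
        congr 1
        rw [← Summable.tsum_sub hβ hc, ← tsum_mul_left]
        rw [Summable.tsum_eq_zero_add hEfull]
        have hE0 : E 0 = 0 := rfl
        rw [hE0, zero_add]
        apply tsum_congr
        intro k
        show 2*x*(Vco (ν+2) ν k * x ^ k - Vco (ν+1) (ν+1) k * x ^ k)
            = (2*(Vco (ν+2) ν k - Vco (ν+1) (ν+1) k)) * x ^ (k+1)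
        rw [pow_succ]
        ring
    _ = ∑' k : ℕ, hco ν k * x ^ k := by
        rw [← Summable.tsum_add hα hEfull]
        exact tsum_congr fun k => (hpt k).symm

lemma summable_hco (ν : ℝ) (hν0 : 0 < ν) (x : ℝ) :
    Summable (fun k : ℕ => hco ν k * x ^ k) := by
  have hα := summable_Vco (ν+1) ν (by positivity) hν0 x
  have hβ := summable_Vco (ν+2) ν (by positivity) hν0 x
  have hc := summable_Vco (ν+1) (ν+1) (by positivity) (by positivity) x
  have hE : Summable (fun k : ℕ => (2*(Vco (ν+2) ν k - Vco (ν+1) (ν+1) k)) * x ^ (k+1)) := by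
    apply (((hβ.sub hc)).mul_left (2*x)).congr
    intro k
    rw [pow_succ]
    ring
  have hEfull : Summable (fun k : ℕ => (Nat.rec (motive := fun _ => ℝ) 0
      (fun k _ => (2*(Vco (ν+2) ν k - Vco (ν+1) (ν+1) k)) * x ^ (k+1)) k : ℝ)) := by
    rw [← summable_nat_add_iff 1]
    exact hE
  apply (hα.add hEfull).congr
  intro k
  cases k with
  | zero => simp [hco]
  | succ k =>
      show Vco (ν+1) ν (k+1) * x ^ (k+1) + (2*(Vco (ν+2) ν k - Vco (ν+1) (ν+1) k)) * x ^ (k+1)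
        = (Vco (ν+1) ν (k+1) + 2*(Vco (ν+2) ν k - Vco (ν+1) (ν+1) k)) * x ^ (k+1)
      ring

lemma H_pos (ν : ℝ) (hν : 1/2 ≤ ν) (x : ℝ) (hx : 0 ≤ x) :
    0 < JJ (ν+1) x * JJ ν x + 2*x*(JJ (ν+2) x * JJ ν x - JJ (ν+1) x * JJ (ν+1) x) := by
  have hν0 : (0:ℝ) < ν := by linarith
  rw [H_eq ν hν0 x]
  apply Summable.tsum_pos (summable_hco ν hν0 x) _ 0
  · have := hco_zero_pos ν hν0
    simpa using this
  · intro k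
    have hk : 0 ≤ hco ν k := by
      cases k with
      | zero => exact (hco_zero_pos ν hν0).le
      | succ k => exact hco_succ_nonneg ν hν k
    positivity


lemma strictAntiOn_Phi (ν : ℝ) (hν : 1/2 ≤ ν) (C : ℝ) (hC : 0 < C) :
    StrictAntiOn (fun y : ℝ => (-2*y) * (JJ (ν+1) y / JJ ν y) + Real.log (C * JJ ν y))
      (Set.Ioi (0:ℝ)) := by
  have hν0 : (0:ℝ) < ν := by linarith
  have hkey : ∀ y ∈ Set.Ioi (0:ℝ), HasDerivAt
      (fun y : ℝ => (-2*y) * (JJ (ν+1) y / JJ ν y) + Real.log (C * JJ ν y))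
      (-((JJ (ν+1) y * JJ ν y + 2*y*(JJ (ν+2) y * JJ ν y - JJ (ν+1) y * JJ (ν+1) y))
        / (JJ ν y)^2)) y := by
    intro y hy
    have hy0 : (0:ℝ) < y := hy
    have hd0 : HasDerivAt (JJ ν) (JJ (ν+1) y) y := hasDerivAt_JJ ν hν0 y
    have hd1 : HasDerivAt (JJ (ν+1)) (JJ (ν+1+1) y) y := hasDerivAt_JJ (ν+1) (by positivity) y
    have h0pos : 0 < JJ ν y := JJ_pos ν hν0 y hy0.le
    have hd1' : HasDerivAt (JJ (ν+1)) (JJ (ν+2) y) y := by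
      have : ν + 1 + 1 = ν + 2 := by ring
      rwa [this] at hd1
    have hlin : HasDerivAt (fun y : ℝ => -2*y) (-2) y := by
      simpa using (hasDerivAt_id y).const_mul (-2:ℝ)
    have hratio : HasDerivAt (fun y => JJ (ν+1) y / JJ ν y)
        ((JJ (ν+2) y * JJ ν y - JJ (ν+1) y * JJ (ν+1) y) / (JJ ν y)^2) y :=
      hd1'.div hd0 h0pos.ne'
    have hmul := hlin.mul hratio
    have hlog : HasDerivAt (fun y => Real.log (C * JJ ν y))
        ((C * JJ (ν+1) y) / (C * JJ ν y)) y :=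
      (hd0.const_mul C).log (by positivity)
    have : HasDerivAt (fun y => (-2*y) * (JJ (ν+1) y / JJ ν y) + Real.log (C * JJ ν y)) _ y :=
      hmul.add hlog
    convert this using 1
    field_simp
    ring
  apply strictAntiOn_of_deriv_neg (convex_Ioi (0:ℝ))
  · intro y hy
    exact ((hkey y hy).continuousAt).continuousWithinAt
  · intro y hy
    rw [interior_Ioi] at hy
    rw [(hkey y hy).deriv]
    have hy0 : (0:ℝ) < y := hy
    have h0pos : 0 < JJ ν y := JJ_pos ν hν0 y hy0.le
    have hH := H_pos ν hν y hy0.le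
    have h2 : (0:ℝ) < (JJ ν y)^2 := by positivity
    exact neg_neg_of_pos (div_pos hH h2)
end XiAux
lemma besselI_eq_JJ (μ : ℝ) (t : ℝ) (ht : 0 < t) :
    besselI μ t = (t/2) ^ μ * XiAux.JJ (μ+1) (t^2/4) := by
  have ht2 : (0:ℝ) < t/2 := by positivity
  rw [besselI, XiAux.JJ, ← tsum_mul_left]
  apply tsum_congr
  intro m
  have h1 : (t/2) ^ (2*(m:ℝ) + μ) = (t^2/4)^m * (t/2)^μ := by
    rw [Real.rpow_add ht2]
    congr 1
    rw [show (2*(m:ℝ)) = ((2*m : ℕ) : ℝ) by push_cast; ring, Real.rpow_natCast, pow_mul]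
    congr 1
    ring
  rw [h1]
  have h2 : ((m:ℝ) + μ + 1) = (m:ℝ) + (μ + 1) := by ring
  rw [h2]
  ring

/-- **Lemma.** For `ν ≥ 1/2`, `t ↦ ξ_ν(t)` is strictly decreasing on `(0,∞)`. -/
theorem strictAntiOn_xiFun (ν : ℝ) (hν : 1 / 2 ≤ ν) :
    StrictAntiOn (xiFun ν) (Set.Ioi (0:ℝ)) := by
  have hν0 : (0:ℝ) < ν := by linarith
  have hπ : (0:ℝ) < π := Real.pi_pos
  set C : ℝ := (2*π)^ν * (1/2:ℝ)^(ν-1) with hCdef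
  have hC : 0 < C := by
    apply mul_pos (Real.rpow_pos_of_pos (by positivity) _) (Real.rpow_pos_of_pos (by norm_num) _)
  have hxi : ∀ t ∈ Set.Ioi (0:ℝ), xiFun ν t =
      (-2*(t^2/4)) * (XiAux.JJ (ν+1) (t^2/4) / XiAux.JJ ν (t^2/4))
        + Real.log (C * XiAux.JJ ν (t^2/4)) := by
    intro t ht
    have ht0 : (0:ℝ) < t := ht
    have ht2 : (0:ℝ) < t/2 := by positivity
    have hI1 : besselI ν t = (t/2)^ν * XiAux.JJ (ν+1) (t^2/4) := besselI_eq_JJ ν t ht0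
    have hI0 : besselI (ν-1) t = (t/2)^(ν-1) * XiAux.JJ ν (t^2/4) := by
      have h := besselI_eq_JJ (ν-1) t ht0
      rwa [show ν - 1 + 1 = ν by ring] at h
    have hJ0 : 0 < XiAux.JJ ν (t^2/4) := XiAux.JJ_pos ν hν0 _ (by positivity)
    have hpow : (0:ℝ) < (t/2)^(ν-1) := Real.rpow_pos_of_pos ht2 _
    have hratio : besselRatio ν t = (t/2) * (XiAux.JJ (ν+1) (t^2/4) / XiAux.JJ ν (t^2/4)) := by
      rw [besselRatio, hI1, hI0,
        show (t/2:ℝ)^ν = (t/2)^(ν-1) * (t/2) by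
          rw [← Real.rpow_add_one ht2.ne' (ν-1)]; congr 1; ring]
      field_simp
    have harg : (2*π)^ν * besselI (ν-1) t / t^(ν-1) = C * XiAux.JJ ν (t^2/4) := by
      rw [hI0, hCdef]
      have htp : (0:ℝ) < t^(ν-1) := Real.rpow_pos_of_pos ht0 _
      have hsplit : (t/2:ℝ)^(ν-1) = t^(ν-1) * (1/2:ℝ)^(ν-1) := by
        rw [← Real.mul_rpow ht0.le (by norm_num)]
        congr 1
        ring
      rw [hsplit]
      field_simp
    rw [xiFun, hratio, harg]
    ring
  intro t1 ht1 t2 ht2 hlt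
  rw [hxi t1 ht1, hxi t2 ht2]
  have ht1' : t1^2/4 ∈ Set.Ioi (0:ℝ) := by
    have : (0:ℝ) < t1 := ht1
    simp only [Set.mem_Ioi]
    positivity
  have ht2' : t2^2/4 ∈ Set.Ioi (0:ℝ) := by
    have : (0:ℝ) < t2 := ht2
    simp only [Set.mem_Ioi]
    positivity
  have hsq : t1^2/4 < t2^2/4 := by
    have h1 : (0:ℝ) < t1 := ht1
    nlinarith
  exact XiAux.strictAntiOn_Phi ν hν C hC ht1' ht2' hsq

end
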